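/- Frame averaging yields equivariant maps: let G be a group acting on a set V via ρ_V and acting on a real vector space W via ρ_W, where each ρ_W(g) is an affine map of W. Let F be an equivariant frame on V, i.e., F assigns to each v ∈ V a nonempty finite subset F(v) ⊂ G with F(ρ_V(g)v) = g·F(v) for all g ∈ G and v ∈ V. Then for any function φ : V → W, the frame average ⟨φ⟩_F(v) = (1/|F(v)|) Σ_{g ∈ F(v)} ρ_W(g) φ(ρ_V(g)⁻¹ v) is equivariant: ⟨φ⟩_F(ρ_V(g)v) = ρ_W(g) ⟨φ⟩_F(v) for all g ∈ G, v ∈ V. -/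
import Mathlib

/-- **Frame averaging yields equivariant maps**: let `G` be a group acting on a set `V`
via `ρV` and on a real vector space `W` via `ρW`, where each `ρW g` is an affine map.
If `F` is an equivariant frame (nonempty finite subsets of `G` with
`F(ρV(g)v) = g F(v)`), then for any `φ : V → W` the frame average
`⟨φ⟩_F(v) = (1/|F(v)|) Σ_{h ∈ F(v)} ρW(h) φ(ρV(h)⁻¹ v)` is equivariant. -/
theorem frame_average_equivariant
    {G V W : Type*} [Group G] [DecidableEq G] [AddCommGroup W] [Module ℝ W]
    (ρV : G → V → V) (hV1 : ∀ v, ρV 1 v = v)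
    (hVmul : ∀ g h v, ρV (g * h) v = ρV g (ρV h v))
    (ρW : G → W → W) (hW1 : ∀ x, ρW 1 x = x)
    (hWmul : ∀ g h x, ρW (g * h) x = ρW g (ρW h x))
    (hAff : ∀ g : G, ∃ (L : W →ₗ[ℝ] W) (b : W), ∀ x, ρW g x = L x + b)
    (F : V → Finset G) (hne : ∀ v, (F v).Nonempty)
    (hF : ∀ g v, F (ρV g v) = (F v).image (fun h => g * h))
    (φ : V → W) (g : G) (v : V) :
    ((F (ρV g v)).card : ℝ)⁻¹ • ∑ h ∈ F (ρV g v), ρW h (φ (ρV h⁻¹ (ρV g v))) =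
      ρW g (((F v).card : ℝ)⁻¹ • ∑ h ∈ F v, ρW h (φ (ρV h⁻¹ v))) := by
  have hinj : Function.Injective (fun h : G => g * h) := fun a b hab => by
    simpa using hab
  have hcard : (F (ρV g v)).card = (F v).card := by
    rw [hF, Finset.card_image_of_injective _ hinj]
  have hsum : ∑ h ∈ F (ρV g v), ρW h (φ (ρV h⁻¹ (ρV g v)))
      = ∑ h ∈ F v, ρW g (ρW h (φ (ρV h⁻¹ v))) := by
    rw [hF, Finset.sum_image (fun a _ b _ hab => hinj hab)]
    refine Finset.sum_congr rfl fun h _ => ?_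
    rw [hWmul]
    congr 2
    rw [← hVmul]
    have : (g * h)⁻¹ * g = h⁻¹ := by group
    rw [this]
  obtain ⟨L, b, hLb⟩ := hAff g
  have hn : ((F v).card : ℝ) ≠ 0 := by
    exact Nat.cast_ne_zero.mpr (Finset.card_pos.mpr (hne v)).ne'
  rw [hcard, hsum]
  simp only [hLb]
  rw [Finset.sum_add_distrib, Finset.sum_const, smul_add, ← map_sum, smul_comm,
    ← L.map_smul]
  congr 1
  rw [← Nat.cast_smul_eq_nsmul ℝ, smul_smul, mul_inv_cancel₀ hn, one_smul]
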